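/- Let λ > 0 and let X and Y be real-valued random variables such that E[e^{λX}], E[Y e^{λY}] and E[e^{λY}] are finite. Then E[X e^{λY}] ≤ E[Y e^{λY}] + (log E[e^{λX}] / λ) * E[e^{λY}] - (log E[e^{λY}] / λ) * E[e^{λY}]. -/

import Mathlib

open MeasureTheory Real

theorem stmt_5 {Ω : Type*} [MeasurableSpace Ω] (μ : Measure Ω) [IsProbabilityMeasure μ]
    (X Y : Ω → ℝ) (l : ℝ) (hl : 0 < l)
    (hX : Integrable (fun ω => Real.exp (l * X ω)) μ)
    (hYe : Integrable (fun ω => Y ω * Real.exp (l * Y ω)) μ)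
    (hY : Integrable (fun ω => Real.exp (l * Y ω)) μ)
    (hXY : Integrable (fun ω => X ω * Real.exp (l * Y ω)) μ) :
    ∫ ω, X ω * Real.exp (l * Y ω) ∂μ ≤
      ∫ ω, Y ω * Real.exp (l * Y ω) ∂μ
        + (Real.log (∫ ω, Real.exp (l * X ω) ∂μ) / l) * ∫ ω, Real.exp (l * Y ω) ∂μ
        - (Real.log (∫ ω, Real.exp (l * Y ω) ∂μ) / l) * ∫ ω, Real.exp (l * Y ω) ∂μ := by
  set A := ∫ ω, Real.exp (l * X ω) ∂μ with hAdef
  set B := ∫ ω, Real.exp (l * Y ω) ∂μ with hBdef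
  have hA : 0 < A := integral_exp_pos hX
  have hB : 0 < B := integral_exp_pos hY
  set c := Real.log A / l with hcdef
  set d := Real.log B / l with hddef
  have hlc : l * c = Real.log A := by rw [hcdef]; field_simp
  have hld : l * d = Real.log B := by rw [hddef]; field_simp
  -- pointwise inequality
  have hpt : ∀ ω, (1 - l*c + l*d) * Real.exp (l * Y ω)
        + l * (X ω * Real.exp (l * Y ω)) - l * (Y ω * Real.exp (l * Y ω))
      ≤ Real.exp (l*d - l*c) * Real.exp (l * X ω) := by
    intro ω
    have h1 : (l*(X ω - c) - l*(Y ω - d)) + 1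
        ≤ Real.exp (l*(X ω - c) - l*(Y ω - d)) :=
      Real.add_one_le_exp _
    have h2 : Real.exp (l * Y ω) * ((l*(X ω - c) - l*(Y ω - d)) + 1)
        ≤ Real.exp (l * Y ω) * Real.exp (l*(X ω - c) - l*(Y ω - d)) :=
      mul_le_mul_of_nonneg_left h1 (Real.exp_pos _).le
    have h3 : Real.exp (l * Y ω) * Real.exp (l*(X ω - c) - l*(Y ω - d))
        = Real.exp (l*d - l*c) * Real.exp (l * X ω) := by
      rw [← Real.exp_add, ← Real.exp_add]; ring_nf
    nlinarith [h2, h3]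
  -- integrability of both sides
  have hLint : Integrable (fun ω => (1 - l*c + l*d) * Real.exp (l * Y ω)
        + l * (X ω * Real.exp (l * Y ω)) - l * (Y ω * Real.exp (l * Y ω))) μ :=
    ((hY.const_mul _).add (hXY.const_mul _)).sub (hYe.const_mul _)
  have hRint : Integrable (fun ω => Real.exp (l*d - l*c) * Real.exp (l * X ω)) μ :=
    hX.const_mul _
  have hint := integral_mono hLint hRint hpt
  rw [integral_const_mul] at hint
  have hLeq : ∫ ω, ((1 - l*c + l*d) * Real.exp (l * Y ω)
        + l * (X ω * Real.exp (l * Y ω)) - l * (Y ω * Real.exp (l * Y ω))) ∂μ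
      = (1 - l*c + l*d) * B + l * (∫ ω, X ω * Real.exp (l * Y ω) ∂μ)
          - l * (∫ ω, Y ω * Real.exp (l * Y ω) ∂μ) := by
    have hadd : Integrable (fun ω => (1 - l*c + l*d) * Real.exp (l * Y ω)
        + l * (X ω * Real.exp (l * Y ω))) μ := (hY.const_mul _).add (hXY.const_mul _)
    have hsub : Integrable (fun ω => l * (Y ω * Real.exp (l * Y ω))) μ := hYe.const_mul _
    have h1 : Integrable (fun ω => (1 - l*c + l*d) * Real.exp (l * Y ω)) μ := hY.const_mul _
    have h2 : Integrable (fun ω => l * (X ω * Real.exp (l * Y ω))) μ := hXY.const_mul _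
    rw [integral_sub hadd hsub, integral_add h1 h2,
      integral_const_mul, integral_const_mul, integral_const_mul]
  rw [hLeq] at hint
  have hR : Real.exp (l*d - l*c) * A = B := by
    rw [Real.exp_sub, hlc, hld, Real.exp_log hA, Real.exp_log hB]
    field_simp
  rw [hR] at hint
  have h4 : (∫ ω, X ω * Real.exp (l * Y ω) ∂μ)
      ≤ (∫ ω, Y ω * Real.exp (l * Y ω) ∂μ) + c * B - d * B := by
    nlinarith [hint, hl]
  calc (∫ ω, X ω * Real.exp (l * Y ω) ∂μ)
      ≤ (∫ ω, Y ω * Real.exp (l * Y ω) ∂μ) + c * B - d * B := h4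
    _ = (∫ ω, Y ω * Real.exp (l * Y ω) ∂μ) + (Real.log A / l) * B
          - (Real.log B / l) * B := by rw [hcdef, hddef]
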